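/- Let z_1,…,z_N be N distinct complex numbers, let α be a complex number with α ≠ z_k for all k, and for each integer μ ≥ 0 let D_μ be the N×N matrix with (D_μ)_{ii} = Σ_{k≠i} 1/(z_i − z_k) − μ/(z_i − α) and (D_μ)_{ij} = ((z_j − α)^μ/(z_i − α)^μ) · ω'(z_i)/((z_i − z_j) ω'(z_j)) for i ≠ j, where ω'(z_i) = ∏_{k≠i}(z_i − z_k). Define the ordered product D_n(m) = D_{m+n−1}·D_{m+n−2}···D_m. If q is a complex polynomial of degree at most N−1, m ≥ 0, and f(z) = q(z)/(z − α)^m, then for every n ≥ 0 and every i, f^{(n)}(z_i) = Σ_{j=1}^N (D_n(m))_{ij} f(z_j). -/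

import Mathlib

open Finset

section Helpers

open Polynomial

/-- Derivative of a rational function `r(z)/(z-α)^μ` away from the pole. -/
lemma hasDerivAt_ratfun (r : Polynomial ℂ) (α : ℂ) (μ : ℕ) (z : ℂ) (hzα : z ≠ α) :
    HasDerivAt (fun w => r.eval w / (w - α) ^ μ)
      ((r.derivative.eval z * (z - α) - μ * r.eval z) / (z - α) ^ (μ + 1)) z := by
  have hz : z - α ≠ 0 := sub_ne_zero.mpr hzα
  have h1 := (r.hasDerivAt z).fun_div (((hasDerivAt_id z).sub_const α).fun_pow μ) (pow_ne_zero μ hz)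
  refine (h1.congr_deriv ?_ :)
  symm
  cases μ with
  | zero => simp; exact mul_div_cancel_right₀ _ hz
  | succ p =>
    simp only [Nat.add_sub_cancel, mul_one, id_eq]
    field_simp
    ring

lemma derivative_prod_X_sub_C' {ι : Type*} [DecidableEq ι] (s : Finset ι) (v : ι → ℂ) :
    Polynomial.derivative (∏ k ∈ s, (X - C (v k))) = ∑ b ∈ s, ∏ a ∈ s.erase b, (X - C (v a)) := by
  induction s using Finset.induction_on with
  | empty => simp
  | @insert c s hc ih =>
    rw [Finset.prod_insert hc, derivative_mul, derivative_sub, derivative_X, derivative_C,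
      sub_zero, one_mul, ih, Finset.sum_insert hc, Finset.erase_insert hc, Finset.mul_sum]
    congr 1
    refine Finset.sum_congr rfl fun b hb => ?_
    have hbc : b ≠ c := fun h => hc (h ▸ hb)
    rw [Finset.erase_insert_of_ne hbc.symm,
      Finset.prod_insert (fun h => hc (Finset.mem_of_mem_erase h))]

/-- Lagrange interpolation at the nodes `zs j`. -/
lemma interp_eq (N : ℕ) (hN : 0 < N) (zs : Fin N → ℂ) (hz : Function.Injective zs)
    (r : Polynomial ℂ) (hr : r.degree ≤ (N - 1 : ℕ)) :
    r = ∑ j, C (r.eval (zs j) / ∏ k ∈ Finset.univ.erase j, (zs j - zs k)) *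
        ∏ k ∈ Finset.univ.erase j, (X - C (zs k)) := by
  have hcard : #(Finset.univ : Finset (Fin N)) = N := by simp
  have hNlt : ((N - 1 : ℕ) : WithBot ℕ) < (N : WithBot ℕ) :=
    Nat.cast_lt.mpr (Nat.sub_lt hN one_pos)
  refine Polynomial.eq_of_degrees_lt_of_eval_index_eq Finset.univ (hz.injOn)
    (by rw [hcard]; exact hr.trans_lt hNlt) ?_ ?_
  · rw [hcard]
    refine (Polynomial.degree_sum_le _ _).trans_lt ((Finset.sup_lt_iff (by
      exact_mod_cast WithBot.bot_lt_coe N)).mpr fun j _ => ?_)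
    refine (Polynomial.degree_mul_le _ _).trans_lt ?_
    have h1 : (∏ k ∈ Finset.univ.erase j, (X - C (zs k))).degree = ((N - 1 : ℕ) : WithBot ℕ) := by
      rw [Polynomial.degree_prod]
      simp [Polynomial.degree_X_sub_C, Finset.card_erase_of_mem]
    calc (C (r.eval (zs j) / ∏ k ∈ Finset.univ.erase j, (zs j - zs k))).degree +
          (∏ k ∈ Finset.univ.erase j, (X - C (zs k))).degree
        ≤ 0 + ((N - 1 : ℕ) : WithBot ℕ) := add_le_add Polynomial.degree_C_le h1.le
      _ < (N : WithBot ℕ) := by rw [zero_add]; exact hNlt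
  · intro i _
    rw [Polynomial.eval_finset_sum, Finset.sum_eq_single i]
    · have hd : (∏ k ∈ Finset.univ.erase i, (zs i - zs k)) ≠ 0 :=
        Finset.prod_ne_zero_iff.mpr fun k hk =>
          sub_ne_zero.mpr (fun h => (Finset.mem_erase.mp hk).1 (hz h).symm)
      simp only [eval_mul, eval_C, Polynomial.eval_prod, eval_sub, eval_X]
      rw [div_mul_cancel₀ _ hd]
    · intro j _ hji
      simp only [eval_mul, eval_C, Polynomial.eval_prod, eval_sub, eval_X]
      apply mul_eq_zero_of_right
      exact Finset.prod_eq_zero (Finset.mem_erase.mpr ⟨hji.symm, Finset.mem_univ i⟩) (sub_self _)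
    · simp

end Helpers

/-- The rational differentiation matrix `D_μ` for a pole of order `μ` at `α`. -/
noncomputable def rationalDiffMatrix (N : ℕ) (zs : Fin N → ℂ) (α : ℂ) (μ : ℕ) :
    Matrix (Fin N) (Fin N) ℂ := fun i j =>
  if i = j then
    (∑ k ∈ Finset.univ.erase i, 1 / (zs i - zs k)) - μ / (zs i - α)
  else
    ((zs j - α) ^ μ / (zs i - α) ^ μ) *
      ((∏ k ∈ Finset.univ.erase i, (zs i - zs k)) /
        ((zs i - zs j) * ∏ k ∈ Finset.univ.erase j, (zs j - zs k)))

/-- The ordered product `D_n(m) = D_{m+n−1} · D_{m+n−2} ⋯ D_m`. -/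
noncomputable def rationalDiffMatrixProd (N : ℕ) (zs : Fin N → ℂ) (α : ℂ) (m : ℕ) :
    ℕ → Matrix (Fin N) (Fin N) ℂ
  | 0 => 1
  | n + 1 => rationalDiffMatrix N zs α (m + n) * rationalDiffMatrixProd N zs α m n

section OneStep

open Polynomial

/-- One differentiation step: `D_μ` maps nodal values of `r/(z-α)^μ` to nodal values of its
derivative. -/
lemma rationalDiffMatrix_step (N : ℕ) (zs : Fin N → ℂ) (hz : Function.Injective zs) (α : ℂ)
    (hα : ∀ k, α ≠ zs k) (μ : ℕ) (r : Polynomial ℂ) (hr : r.degree ≤ (N - 1 : ℕ)) (i : Fin N) :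
    deriv (fun z => r.eval z / (z - α) ^ μ) (zs i)
      = ∑ j, rationalDiffMatrix N zs α μ i j * (r.eval (zs j) / (zs j - α) ^ μ) := by
  have hN : 0 < N := i.pos
  have hd : ∀ j : Fin N, (∏ k ∈ Finset.univ.erase j, (zs j - zs k)) ≠ 0 := fun j =>
    Finset.prod_ne_zero_iff.mpr fun k hk =>
      sub_ne_zero.mpr (fun h => (Finset.mem_erase.mp hk).1 (hz h).symm)
  have hzα : ∀ k : Fin N, zs k - α ≠ 0 := fun k => sub_ne_zero.mpr fun h => hα k h.symm
  have hx : zs i ≠ α := fun h => hα i h.symm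
  have hfg : ∀ z : ℂ, r.eval z / (z - α) ^ μ =
      ∑ j, (r.eval (zs j) / ∏ k ∈ Finset.univ.erase j, (zs j - zs k)) *
        ((∏ k ∈ Finset.univ.erase j, (X - C (zs k))).eval z / (z - α) ^ μ) := by
    intro z
    have h := congrArg (Polynomial.eval z) (interp_eq N hN zs hz r hr)
    rw [Polynomial.eval_finset_sum] at h
    simp only [eval_mul, eval_C] at h
    rw [h, Finset.sum_div]
    exact Finset.sum_congr rfl fun j _ => by rw [mul_div_assoc]
  have hg : HasDerivAt (fun z => ∑ j, (r.eval (zs j) / ∏ k ∈ Finset.univ.erase j, (zs j - zs k)) *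
      ((∏ k ∈ Finset.univ.erase j, (X - C (zs k))).eval z / (z - α) ^ μ))
      (∑ j, (r.eval (zs j) / ∏ k ∈ Finset.univ.erase j, (zs j - zs k)) *
        (((Polynomial.derivative (∏ k ∈ Finset.univ.erase j, (X - C (zs k)))).eval (zs i) *
            (zs i - α) - μ * (∏ k ∈ Finset.univ.erase j, (X - C (zs k))).eval (zs i)) /
          (zs i - α) ^ (μ + 1))) (zs i) :=
    HasDerivAt.fun_sum fun j _ => (hasDerivAt_ratfun _ α μ (zs i) hx).const_mul _
  have hfun : (fun z => r.eval z / (z - α) ^ μ) = fun z =>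
      ∑ j, (r.eval (zs j) / ∏ k ∈ Finset.univ.erase j, (zs j - zs k)) *
        ((∏ k ∈ Finset.univ.erase j, (X - C (zs k))).eval z / (z - α) ^ μ) := funext hfg
  rw [hfun, hg.deriv]
  refine Finset.sum_congr rfl fun j _ => ?_
  by_cases hij : i = j
  · subst hij
    have hPix : (∏ k ∈ Finset.univ.erase i, (X - C (zs k))).eval (zs i)
        = ∏ k ∈ Finset.univ.erase i, (zs i - zs k) := by
      simp [Polynomial.eval_prod]
    have hS : (Polynomial.derivative (∏ k ∈ Finset.univ.erase i, (X - C (zs k)))).eval (zs i)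
        = (∑ k ∈ Finset.univ.erase i, 1 / (zs i - zs k)) *
          ∏ k ∈ Finset.univ.erase i, (zs i - zs k) := by
      rw [derivative_prod_X_sub_C', Polynomial.eval_finset_sum, Finset.sum_mul]
      refine Finset.sum_congr rfl fun k hk => ?_
      simp only [Polynomial.eval_prod, eval_sub, eval_X, eval_C]
      rw [← Finset.mul_prod_erase _ (fun a => zs i - zs a) hk]
      have hik : zs i - zs k ≠ 0 :=
        sub_ne_zero.mpr (fun h => (Finset.mem_erase.mp hk).1 (hz h).symm)
      field_simp
    rw [rationalDiffMatrix, if_pos rfl, hPix, hS]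
    have hdi := hd i
    have hxa := hzα i
    field_simp
    ring
  · have hPjx : (∏ k ∈ Finset.univ.erase j, (X - C (zs k))).eval (zs i) = 0 := by
      simp only [Polynomial.eval_prod, eval_sub, eval_X, eval_C]
      exact Finset.prod_eq_zero (Finset.mem_erase.mpr ⟨hij, Finset.mem_univ i⟩) (sub_self _)
    have hE : (Polynomial.derivative (∏ k ∈ Finset.univ.erase j, (X - C (zs k)))).eval (zs i)
        = ∏ a ∈ (Finset.univ.erase j).erase i, (zs i - zs a) := by
      rw [derivative_prod_X_sub_C', Polynomial.eval_finset_sum, Finset.sum_eq_single i]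
      · simp [Polynomial.eval_prod]
      · intro b hb hbi
        simp only [Polynomial.eval_prod, eval_sub, eval_X, eval_C]
        exact Finset.prod_eq_zero (Finset.mem_erase.mpr ⟨fun h => hbi h.symm,
          Finset.mem_erase.mpr ⟨hij, Finset.mem_univ i⟩⟩) (sub_self _)
      · intro h
        exact absurd (Finset.mem_erase.mpr ⟨hij, Finset.mem_univ i⟩) h
    have hdi_split : (∏ k ∈ Finset.univ.erase i, (zs i - zs k))
        = (zs i - zs j) * ∏ a ∈ (Finset.univ.erase j).erase i, (zs i - zs a) := by
      have hcomm : (Finset.univ.erase j).erase i = ((Finset.univ.erase i).erase j : Finset (Fin N)) := by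
        ext x; simp only [Finset.mem_erase, Finset.mem_univ, and_true]; tauto
      rw [hcomm]
      exact (Finset.mul_prod_erase _ _
        (Finset.mem_erase.mpr ⟨fun h => hij h.symm, Finset.mem_univ j⟩)).symm
    rw [rationalDiffMatrix, if_neg hij, hPjx, hE, hdi_split]
    have hdj := hd j
    have hxa := hzα i
    have hja := hzα j
    have hij' : zs i - zs j ≠ 0 := sub_ne_zero.mpr (fun h => hij (hz h))
    field_simp
    ring

/-- Closed form for iterated derivatives of `q/(z-α)^m`. -/
lemma exists_poly_iteratedDeriv (N : ℕ) (α : ℂ) (m : ℕ) (q : Polynomial ℂ)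
    (hq : q.degree ≤ (N - 1 : ℕ)) (n : ℕ) :
    ∃ r : Polynomial ℂ, r.degree ≤ ((N - 1 : ℕ) : WithBot ℕ) ∧ ∀ z : ℂ, z ≠ α →
      iteratedDeriv n (fun w : ℂ => q.eval w / (w - α) ^ m) z = r.eval z / (z - α) ^ (m + n) := by
  induction n with
  | zero => exact ⟨q, hq, fun z _ => by simp⟩
  | succ n ih =>
    obtain ⟨r, hrdeg, hr⟩ := ih
    refine ⟨Polynomial.derivative r * (X - C α) - C ((m + n : ℕ) : ℂ) * r, ?_, ?_⟩
    · have hC : (C ((m + n : ℕ) : ℂ) * r).degree ≤ ((N - 1 : ℕ) : WithBot ℕ) := by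
        refine (Polynomial.degree_mul_le _ _).trans ?_
        calc (C ((m + n : ℕ) : ℂ)).degree + r.degree ≤ 0 + r.degree :=
              add_le_add Polynomial.degree_C_le le_rfl
          _ = r.degree := zero_add _
          _ ≤ _ := hrdeg
      refine (Polynomial.degree_sub_le _ _).trans (max_le ?_ hC)
      by_cases h0 : Polynomial.derivative r = 0
      · simp [h0]
      · have hrne : r ≠ 0 := fun h => h0 (by simp [h])
        refine (Polynomial.degree_mul_le _ _).trans ?_
        rw [Polynomial.degree_X_sub_C]
        exact (Nat.WithBot.add_one_le_of_lt (Polynomial.degree_derivative_lt hrne)).trans hrdeg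
    · intro z hzα
      have hev : iteratedDeriv n (fun w : ℂ => q.eval w / (w - α) ^ m) =ᶠ[nhds z]
          (fun w => r.eval w / (w - α) ^ (m + n)) := by
        filter_upwards [isOpen_compl_singleton.mem_nhds (show z ∈ ({α}ᶜ : Set ℂ) from hzα)]
          with w hw
        exact hr w hw
      rw [iteratedDeriv_succ, hev.deriv_eq, (hasDerivAt_ratfun r α (m + n) z hzα).deriv]
      have : m + (n + 1) = (m + n) + 1 := by ring
      rw [this]
      congr 1
      simp only [Polynomial.eval_sub, Polynomial.eval_mul, Polynomial.eval_C,
        Polynomial.eval_X]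

end OneStep

/-- The ordered products of rational differentiation matrices give higher derivatives:
if `f z = q z / (z − α)^m` with `deg q ≤ N − 1`, then
`f⁽ⁿ⁾(z i) = Σ_j (D_n(m)) i j * f (z j)`. -/
theorem rational_differentiation_matrix_prod (N : ℕ) (zs : Fin N → ℂ)
    (hz : Function.Injective zs) (α : ℂ) (hα : ∀ k, α ≠ zs k) (m : ℕ)
    (q : Polynomial ℂ) (hq : q.degree ≤ (N - 1 : ℕ)) (n : ℕ) (i : Fin N) :
    iteratedDeriv n (fun z : ℂ => q.eval z / (z - α) ^ m) (zs i) =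
      ∑ j, (rationalDiffMatrixProd N zs α m n) i j * (q.eval (zs j) / (zs j - α) ^ m) := by
  induction n generalizing i with
  | zero =>
    simp [rationalDiffMatrixProd, Matrix.one_apply]
  | succ n ih =>
    obtain ⟨r, hrdeg, hr⟩ := exists_poly_iteratedDeriv N α m q hq n
    have hx : zs i ≠ α := fun h => hα i h.symm
    have hev : iteratedDeriv n (fun z : ℂ => q.eval z / (z - α) ^ m) =ᶠ[nhds (zs i)]
        (fun w => r.eval w / (w - α) ^ (m + n)) := by
      filter_upwards [isOpen_compl_singleton.mem_nhds (show zs i ∈ ({α}ᶜ : Set ℂ) from hx)]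
        with w hw
      exact hr w hw
    rw [iteratedDeriv_succ, hev.deriv_eq,
      rationalDiffMatrix_step N zs hz α hα (m + n) r hrdeg i]
    have hval : ∀ k : Fin N, r.eval (zs k) / (zs k - α) ^ (m + n)
        = ∑ j, (rationalDiffMatrixProd N zs α m n) k j * (q.eval (zs j) / (zs j - α) ^ m) := by
      intro k
      rw [← hr (zs k) (fun h => hα k h.symm)]
      exact ih k
    calc ∑ k, rationalDiffMatrix N zs α (m + n) i k * (r.eval (zs k) / (zs k - α) ^ (m + n))
        = ∑ k, rationalDiffMatrix N zs α (m + n) i k *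
            ∑ j, (rationalDiffMatrixProd N zs α m n) k j *
              (q.eval (zs j) / (zs j - α) ^ m) := by
          exact Finset.sum_congr rfl fun k _ => by rw [hval k]
      _ = ∑ j, (∑ k, rationalDiffMatrix N zs α (m + n) i k *
            (rationalDiffMatrixProd N zs α m n) k j) * (q.eval (zs j) / (zs j - α) ^ m) := by
          simp_rw [Finset.mul_sum, Finset.sum_mul]
          rw [Finset.sum_comm]
          simp_rw [mul_assoc]
      _ = ∑ j, (rationalDiffMatrixProd N zs α m (n + 1)) i j *
            (q.eval (zs j) / (zs j - α) ^ m) := by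
          refine Finset.sum_congr rfl fun j _ => ?_
          rw [rationalDiffMatrixProd]
          rw [Matrix.mul_apply]
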